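/- Derivability of the empty-prefix sequent for an infinite λ-term M in the proof system Reg⁺ is equivalent to derivability in Reg₀⁺, where Reg₀⁺ is Reg⁺ with the additional side-condition on FIX instances that every sequent on a thread from an open discharged assumption down to the FIX instance has abstraction prefix length at least that of the assumption. -/

import Mathlib

/-- Node labels of (nameless, de Bruijn) infinite λ-terms. -/
inductive Lab : Type
  | lam : Lab
  | app : Lab
  | var : ℕ → Lab
deriving DecidableEq

/-- Which child positions a node with a given label may have. -/
def okChild : Lab → Bool → Prop
  | .lam, false => True
  | .app, _ => True
  | _, _ => False

/-- Infinite λ-terms (in nameless de Bruijn style), represented as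
labelled possibly-infinite binary trees given by their labelling function. -/
structure Tm : Type where
  lab : List Bool → Option Lab
  root : (lab []).isSome
  cons : ∀ p b, (lab (p ++ [b])).isSome ↔ ∃ l, lab p = some l ∧ okChild l b

namespace Tm

/-- Subterm at a position. -/
def sub (t : Tm) (p : List Bool) (h : (t.lab p).isSome) : Tm where
  lab q := t.lab (p ++ q)
  root := by simpa using h
  cons q b := by
    have h' := t.cons (p ++ q) b
    simpa [List.append_assoc] using h'

/-- Auxiliary: number of λ-labels strictly above, accumulating the prefix. -/
def ldepthAux (t : Tm) : List Bool → List Bool → ℕ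
  | _, [] => 0
  | pre, b :: p => (if t.lab pre = some .lam then 1 else 0) + t.ldepthAux (pre ++ [b]) p

/-- The number of λ-nodes strictly above position `p` in `t`. -/
def ldepth (t : Tm) (p : List Bool) : ℕ := t.ldepthAux [] p

end Tm

def shiftLab (σ : ℕ → ℕ) : Lab → Lab
  | .var k => .var (σ k)
  | l => l

theorem okChild_shiftLab (σ : ℕ → ℕ) (l : Lab) (b : Bool) :
    okChild (shiftLab σ l) b ↔ okChild l b := by
  cases l <;> cases b <;> simp [shiftLab, okChild]

/-- Relabel all variable nodes, depending on their λ-depth. -/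
def Tm.mapVar (t : Tm) (σ : ℕ → ℕ → ℕ) : Tm where
  lab p := (t.lab p).map (shiftLab (σ (t.ldepth p)))
  root := by
    have h := t.root
    cases hl : t.lab [] with
    | none => rw [hl] at h; simp at h
    | some l => simp [hl]
  cons p b := by
    constructor
    · intro hs
      have hs' : (t.lab (p ++ [b])).isSome := by simpa using hs
      obtain ⟨l', hl', hok⟩ := (t.cons p b).1 hs'
      exact ⟨shiftLab (σ (t.ldepth p)) l', by simp [hl'],
        (okChild_shiftLab _ _ _).2 hok⟩
    · rintro ⟨l', hl', hok⟩
      obtain ⟨l, hl, hfl⟩ := Option.map_eq_some_iff.mp (by simpa using hl')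
      have hok' : okChild l b := by
        have := hfl ▸ hok
        exact (okChild_shiftLab (σ (t.ldepth p)) l b).1 this
      have hs : (t.lab (p ++ [b])).isSome := (t.cons p b).2 ⟨l, hl, hok'⟩
      simpa using hs

/-- The term consisting of a single variable node with index 0. -/
def var0Tm : Tm where
  lab p := if p = [] then some (.var 0) else none
  root := by simp
  cons p b := by
    constructor
    · intro h
      simp only [List.append_eq_nil_iff] at h
      simp at h
    · rintro ⟨l, hl, hok⟩
      by_cases hp : p = []
      · subst hp
        simp only [if_pos rfl, Option.some.injEq] at hl
        cases hl
        cases b <;> simp [okChild] at hok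
      · simp [hp] at hl

/-- The last-but-`j` abstraction-prefix variable occurs in `t`
(at λ-depth `d` inside the term it has de Bruijn index `j + d`). -/
def OccursJ (j : ℕ) (t : Tm) : Prop := ∃ p, t.lab p = some (.var (j + t.ldepth p))

/-- Remove the prefix variable with base index `j` from the de Bruijn indexing. -/
def downJ (j : ℕ) (t : Tm) : Tm := t.mapVar (fun d k => if j + d < k then k - 1 else k)

/-- The last abstraction-prefix variable occurs. -/
def occurs0 : Tm → Prop := OccursJ 0

/-- Remove the (vacuous) last abstraction-prefix variable. -/
def down0 : Tm → Tm := downJ 0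

/-- `t` has no free variables pointing outside the term itself. -/
def ClosedTm (t : Tm) : Prop := ∀ p k, t.lab p = some (.var k) → k < t.ldepth p

/-- Sequents: a prefix length together with an infinite λ-term. -/
abbrev TSeq : Type := ℕ × Tm

/-- λ-decomposition step of the ARS `Reg⁺`. -/
def SLam (s s' : TSeq) : Prop :=
  s.2.lab [] = some .lam ∧ s'.1 = s.1 + 1 ∧
    ∃ h : (s.2.lab [false]).isSome, s'.2 = s.2.sub [false] h

/-- Left application-decomposition step. -/
def SApp0 (s s' : TSeq) : Prop :=
  s.2.lab [] = some .app ∧ s'.1 = s.1 ∧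
    ∃ h : (s.2.lab [false]).isSome, s'.2 = s.2.sub [false] h

/-- Right application-decomposition step. -/
def SApp1 (s s' : TSeq) : Prop :=
  s.2.lab [] = some .app ∧ s'.1 = s.1 ∧
    ∃ h : (s.2.lab [true]).isSome, s'.2 = s.2.sub [true] h

/-- Vacuous-prefix removal step (removal of the last prefix variable). -/
def SDel (s s' : TSeq) : Prop :=
  s.1 = s'.1 + 1 ∧ ¬ occurs0 s.2 ∧ s'.2 = down0 s.2

/-- The scope⁺-decomposition ARS `Reg⁺` on prefixed infinite λ-terms. -/
def Step (s s' : TSeq) : Prop := SLam s s' ∨ SApp0 s s' ∨ SApp1 s s' ∨ SDel s s'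

/-- A (scope⁺-delimiting) strategy for the ARS `Reg⁺`: a sub-ARS with the
same objects and the same normal forms. -/
def Strategy (S : TSeq → TSeq → Prop) : Prop :=
  (∀ a b, S a b → Step a b) ∧ (∀ a, (∃ b, Step a b) → ∃ b, S a b)

/-- An infinite λ-term is strongly regular if some scope⁺-delimiting strategy
reaches only finitely many sequents from it. -/
def StronglyRegular (M : Tm) : Prop :=
  ∃ S : TSeq → TSeq → Prop, Strategy S ∧ {s | Relation.ReflTransGen S (0, M) s}.Finite

/-- Natural-deduction derivations of the proof systems `Reg` (`plus = false`)
and `Reg⁺` (`plus = true`) on prefixed infinite λ-terms, with a context of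
open marked assumptions.  Side-conditions on FIX are recorded separately. -/
inductive Deriv (plus : Bool) : List TSeq → TSeq → Type
  | assum (Γ : List TSeq) (i : Fin Γ.length) : Deriv plus Γ (Γ.get i)
  | ax (Γ : List TSeq) (n : ℕ) (h1 : 1 ≤ n) (h2 : plus = false → n = 1) :
      Deriv plus Γ (n, var0Tm)
  | lam (Γ : List TSeq) (n : ℕ) (t : Tm) (h : t.lab [] = some .lam)
      (hs : (t.lab [false]).isSome) (D : Deriv plus Γ (n + 1, t.sub [false] hs)) :
      Deriv plus Γ (n, t)
  | app (Γ : List TSeq) (n : ℕ) (t : Tm) (h : t.lab [] = some .app)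
      (h0 : (t.lab [false]).isSome) (h1 : (t.lab [true]).isSome)
      (D0 : Deriv plus Γ (n, t.sub [false] h0)) (D1 : Deriv plus Γ (n, t.sub [true] h1)) :
      Deriv plus Γ (n, t)
  | del (Γ : List TSeq) (n : ℕ) (t : Tm) (j : ℕ) (hj : j ≤ n) (hp : plus = true → j = 0)
      (hocc : ¬ OccursJ j t) (D : Deriv plus Γ (n, downJ j t)) : Deriv plus Γ (n + 1, t)
  | fix (Γ : List TSeq) (s : TSeq) (D : Deriv plus (s :: Γ) s) : Deriv plus Γ s

namespace Deriv

/-- Depth (number of rule instances on a longest thread). -/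
def depth : ∀ {plus Γ s}, Deriv plus Γ s → ℕ
  | _, _, _, .assum _ _ => 0
  | _, _, _, .ax _ _ _ _ => 0
  | _, _, _, .lam _ _ _ _ _ D => D.depth + 1
  | _, _, _, .app _ _ _ _ _ _ D0 D1 => max D0.depth D1.depth + 1
  | _, _, _, .del _ _ _ _ _ _ _ D => D.depth + 1
  | _, _, _, .fix _ _ D => D.depth + 1

/-- The side-condition of `Reg`/`Reg⁺`: every FIX instance has an immediate
subderivation of depth at least 1. -/
def SC : ∀ {plus Γ s}, Deriv plus Γ s → Prop
  | _, _, _, .assum _ _ => True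
  | _, _, _, .ax _ _ _ _ => True
  | _, _, _, .lam _ _ _ _ _ D => D.SC
  | _, _, _, .app _ _ _ _ _ _ D0 D1 => D0.SC ∧ D1.SC
  | _, _, _, .del _ _ _ _ _ _ _ D => D.SC
  | _, _, _, .fix _ _ D => D.SC ∧ 1 ≤ D.depth

/-- `D.uses j` : some marked-assumption leaf of `D` refers to context entry `j`. -/
def uses : ∀ {plus Γ s}, Deriv plus Γ s → ℕ → Prop
  | _, _, _, .assum _ i, j => (i : ℕ) = j
  | _, _, _, .ax _ _ _ _, _ => False
  | _, _, _, .lam _ _ _ _ _ D, j => D.uses j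
  | _, _, _, .app _ _ _ _ _ _ D0 D1, j => D0.uses j ∨ D1.uses j
  | _, _, _, .del _ _ _ _ _ _ _ D, j => D.uses j
  | _, _, _, .fix _ _ D, j => D.uses (j + 1)

/-- `D.Holds m j` : every node of `D` whose subtree uses context entry `j`
(i.e. every node on a thread from such a marked assumption downwards)
has abstraction-prefix length at least `m`. -/
def Holds : ∀ {plus Γ s}, Deriv plus Γ s → ℕ → ℕ → Prop
  | _, _, _, .assum Γ i, m, j => ((i : ℕ) = j → m ≤ (Γ.get i).1)
  | _, _, _, .ax _ _ _ _, _, _ => True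
  | _, _, _, .lam _ n _ _ _ D, m, j => (D.uses j → m ≤ n) ∧ D.Holds m j
  | _, _, _, .app _ n _ _ _ _ D0 D1, m, j =>
      ((D0.uses j ∨ D1.uses j) → m ≤ n) ∧ D0.Holds m j ∧ D1.Holds m j
  | _, _, _, .del _ n _ _ _ _ _ D, m, j => (D.uses j → m ≤ n + 1) ∧ D.Holds m j
  | _, _, _, .fix _ s D, m, j => (D.uses (j + 1) → m ≤ s.1) ∧ D.Holds m (j + 1)

/-- The side-condition of `Reg₀⁺`: additionally, at every FIX instance all
sequents on threads from its open marked assumptions downwards have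
abstraction prefix at least as long as the one of the assumption. -/
def SC0 : ∀ {plus Γ s}, Deriv plus Γ s → Prop
  | _, _, _, .assum _ _ => True
  | _, _, _, .ax _ _ _ _ => True
  | _, _, _, .lam _ _ _ _ _ D => D.SC0
  | _, _, _, .app _ _ _ _ _ _ D0 D1 => D0.SC0 ∧ D1.SC0
  | _, _, _, .del _ _ _ _ _ _ _ D => D.SC0
  | _, _, _, .fix _ s D => D.SC0 ∧ 1 ≤ D.depth ∧ D.Holds s.1 0

/-- The set of sequents occurring in a derivation. -/
def seqs : ∀ {plus Γ s}, Deriv plus Γ s → Set TSeq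
  | _, _, _, .assum Γ i => {Γ.get i}
  | _, _, _, .ax _ n _ _ => {(n, var0Tm)}
  | _, _, _, .lam _ n t _ _ D => insert (n, t) D.seqs
  | _, _, _, .app _ n t _ _ _ D0 D1 => insert (n, t) (D0.seqs ∪ D1.seqs)
  | _, _, _, .del _ n t _ _ _ _ D => insert (n + 1, t) D.seqs
  | _, _, _, .fix _ s D => insert s D.seqs

end Deriv

namespace Stmt6Aux

open Deriv

attribute [simp] Deriv.SC Deriv.SC0 Deriv.seqs Deriv.uses Deriv.depth Deriv.Holds

/-- Easy direction: the stronger side condition implies the weaker one. -/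
theorem sc0_imp_sc : ∀ {p : Bool} {Γ : List TSeq} {s : TSeq} (D : Deriv p Γ s), D.SC0 → D.SC := by
  intro p Γ s D
  induction D with
  | assum Γ i => simp
  | ax Γ n h1 h2 => simp
  | lam Γ n t h hs D ih => simpa using ih
  | app Γ n t h h0 h1 D0 D1 ih0 ih1 =>
      simp only [Deriv.SC, Deriv.SC0]; exact fun hh => ⟨ih0 hh.1, ih1 hh.2⟩
  | del Γ n t j hj hp hocc D ih => simpa using ih
  | fix Γ s D ih =>
      simp only [Deriv.SC, Deriv.SC0]; exact fun h0 => ⟨ih h0.1, h0.2.1⟩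

/-- The conclusion of a derivation occurs among its sequents. -/
theorem concl_mem_seqs : ∀ {p : Bool} {Γ : List TSeq} {s : TSeq} (D : Deriv p Γ s), s ∈ D.seqs := by
  intro p Γ s D
  induction D with
  | assum Γ i => simp
  | ax Γ n h1 h2 => simp
  | lam Γ n t h hs D ih => simp
  | app Γ n t h h0 h1 D0 D1 ih0 ih1 => simp
  | del Γ n t j hj hp hocc D ih => simp
  | fix Γ s D ih => simp

/-- The set of sequents of a derivation is finite. -/
theorem seqs_finite : ∀ {p : Bool} {Γ : List TSeq} {s : TSeq} (D : Deriv p Γ s), D.seqs.Finite := by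
  intro p Γ s D
  induction D with
  | assum Γ i => simp only [Deriv.seqs]; exact Set.finite_singleton _
  | ax Γ n h1 h2 => simp only [Deriv.seqs]; exact Set.finite_singleton _
  | lam Γ n t h hs D ih => simp only [Deriv.seqs]; exact ih.insert _
  | app Γ n t h h0 h1 D0 D1 ih0 ih1 => simp only [Deriv.seqs]; exact (ih0.union ih1).insert _
  | del Γ n t j hj hp hocc D ih => simp only [Deriv.seqs]; exact ih.insert _
  | fix Γ s D ih => simp only [Deriv.seqs]; exact ih.insert _

/-- A sequent admits one decomposition step, with premises in `G`. -/
def OneStep (G : Set TSeq) (n : ℕ) (t : Tm) : Prop :=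
  (t = var0Tm ∧ 1 ≤ n) ∨
  (∃ (_ : t.lab [] = some Lab.lam) (h : (t.lab [false]).isSome),
      ((n + 1, t.sub [false] h) : TSeq) ∈ G) ∨
  (∃ (_ : t.lab [] = some Lab.app) (h0 : (t.lab [false]).isSome) (h1 : (t.lab [true]).isSome),
      ((n, t.sub [false] h0) : TSeq) ∈ G ∧ ((n, t.sub [true] h1) : TSeq) ∈ G) ∨
  (∃ n', n = n' + 1 ∧ ¬ OccursJ 0 t ∧ ((n', downJ 0 t) : TSeq) ∈ G)

theorem OneStep.mono {G G' : Set TSeq} (h : G ⊆ G') {n : ℕ} {t : Tm} :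
    OneStep G n t → OneStep G' n t := by
  rintro (h1 | ⟨hl, hs, hm⟩ | ⟨hl, h0, h1, hm0, hm1⟩ | ⟨n', hn, ho, hm⟩)
  · exact Or.inl h1
  · exact Or.inr (Or.inl ⟨hl, hs, h hm⟩)
  · exact Or.inr (Or.inr (Or.inl ⟨hl, h0, h1, h hm0, h hm1⟩))
  · exact Or.inr (Or.inr (Or.inr ⟨n', hn, ho, h hm⟩))

/-- A derivation in `Reg⁺` of positive depth satisfying `SC` provides a
decomposition step for its conclusion, with premises among its sequents. -/
theorem oneStep_concl : ∀ {Γ : List TSeq} {s : TSeq} (D : Deriv true Γ s),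
    D.SC → 1 ≤ D.depth → OneStep D.seqs s.1 s.2 := by
  intro Γ s D
  induction D with
  | assum Γ i => intro _ hd; simp at hd
  | ax Γ n h1 h2 => intro _ _; exact Or.inl ⟨rfl, h1⟩
  | lam Γ n t h hs D ih =>
      intro _ _
      refine Or.inr (Or.inl ⟨h, hs, ?_⟩)
      simp only [Deriv.seqs]
      exact Set.mem_insert_iff.2 (Or.inr (concl_mem_seqs D))
  | app Γ n t h h0 h1 D0 D1 ih0 ih1 =>
      intro _ _
      refine Or.inr (Or.inr (Or.inl ⟨h, h0, h1, ?_, ?_⟩)) <;> simp only [Deriv.seqs]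
      · exact Set.mem_insert_iff.2 (Or.inr (Or.inl (concl_mem_seqs D0)))
      · exact Set.mem_insert_iff.2 (Or.inr (Or.inr (concl_mem_seqs D1)))
  | del Γ n t j hj hp hocc D ih =>
      intro _ _
      have hj0 : j = 0 := hp rfl
      subst hj0
      refine Or.inr (Or.inr (Or.inr ⟨n, rfl, hocc, ?_⟩))
      simp only [Deriv.seqs]
      exact Set.mem_insert_iff.2 (Or.inr (concl_mem_seqs D))
  | fix Γ s D ih =>
      intro hsc _
      simp only [Deriv.SC] at hsc
      refine (ih hsc.1 hsc.2).mono ?_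
      simp only [Deriv.seqs]
      exact Set.subset_insert _ _

/-- In a derivation satisfying `SC` all of whose open assumptions have the
one-step property in `T ⊇ seqs`, every sequent has the one-step property. -/
theorem good_all : ∀ {Γ : List TSeq} {s : TSeq} (D : Deriv true Γ s) (T : Set TSeq),
    D.SC → D.seqs ⊆ T →
    (∀ j (hj : j < Γ.length), D.uses j → OneStep T (Γ.get ⟨j, hj⟩).1 (Γ.get ⟨j, hj⟩).2) →
    ∀ x ∈ D.seqs, OneStep T x.1 x.2 := by
  intro Γ s D
  induction D with
  | assum Γ i =>
      intro T _ _ hctx x hx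
      simp only [Deriv.seqs, Set.mem_singleton_iff] at hx
      subst hx
      exact hctx i.1 i.2 (by simp)
  | ax Γ n h1 h2 =>
      intro T _ _ _ x hx
      simp only [Deriv.seqs, Set.mem_singleton_iff] at hx
      subst hx
      exact Or.inl ⟨rfl, h1⟩
  | lam Γ n t h hs D ih =>
      intro T hsc hsub hctx x hx
      simp only [Deriv.seqs] at hx hsub
      rcases Set.mem_insert_iff.1 hx with hx | hx
      · subst hx
        refine Or.inr (Or.inl ⟨h, hs, ?_⟩)
        exact hsub (Set.mem_insert_iff.2 (Or.inr (concl_mem_seqs D)))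
      · exact ih T (by simpa using hsc) (fun y hy => hsub (Set.mem_insert_iff.2 (Or.inr hy)))
          (fun j hj hu => hctx j hj (by simpa using hu)) x hx
  | app Γ n t h h0 h1 D0 D1 ih0 ih1 =>
      intro T hsc hsub hctx x hx
      simp only [Deriv.seqs] at hx hsub
      simp only [Deriv.SC] at hsc
      rcases Set.mem_insert_iff.1 hx with hx | hx
      · subst hx
        refine Or.inr (Or.inr (Or.inl ⟨h, h0, h1, ?_, ?_⟩))
        · exact hsub (Set.mem_insert_iff.2 (Or.inr (Or.inl (concl_mem_seqs D0))))
        · exact hsub (Set.mem_insert_iff.2 (Or.inr (Or.inr (concl_mem_seqs D1))))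
      rcases hx with hx | hx
      · exact ih0 T hsc.1 (fun y hy => hsub (Set.mem_insert_iff.2 (Or.inr (Or.inl hy))))
          (fun j hj hu => hctx j hj (by simp [hu])) x hx
      · exact ih1 T hsc.2 (fun y hy => hsub (Set.mem_insert_iff.2 (Or.inr (Or.inr hy))))
          (fun j hj hu => hctx j hj (by simp [hu])) x hx
  | del Γ n t j hj hp hocc D ih =>
      intro T hsc hsub hctx x hx
      simp only [Deriv.seqs] at hx hsub
      rcases Set.mem_insert_iff.1 hx with hx | hx
      · subst hx
        have hj0 : j = 0 := hp rfl
        subst hj0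
        exact Or.inr (Or.inr (Or.inr ⟨n, rfl, hocc,
          hsub (Set.mem_insert_iff.2 (Or.inr (concl_mem_seqs D)))⟩))
      · exact ih T (by simpa using hsc) (fun y hy => hsub (Set.mem_insert_iff.2 (Or.inr hy)))
          (fun j' hj' hu => hctx j' hj' (by simpa using hu)) x hx
  | fix Γ s D ih =>
      intro T hsc hsub hctx x hx
      simp only [Deriv.seqs] at hx hsub
      simp only [Deriv.SC] at hsc
      have hsub' : D.seqs ⊆ T := fun y hy => hsub (Set.mem_insert_iff.2 (Or.inr hy))
      have hs : OneStep T s.1 s.2 := (oneStep_concl D hsc.1 hsc.2).mono hsub'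
      rcases Set.mem_insert_iff.1 hx with hx | hx
      · subst hx; exact hs
      · refine ih T hsc.1 hsub' ?_ x hx
        intro j hjl hu
        match j, hjl with
        | 0, _ => exact hs
        | (j+1), hjl =>
            have := hctx j (Nat.lt_of_succ_lt_succ hjl) (by simpa using hu)
            simpa using this

end Stmt6Aux
namespace Stmt6Aux

noncomputable local instance : DecidableEq TSeq := Classical.decEq _

/-- Index `j` of the context is valid: no more recent entry has a
strictly smaller prefix length. -/
def validIdx (Γ : List TSeq) (j : ℕ) : Prop :=
  ∀ i (hi : i < Γ.length) (hj : j < Γ.length), i < j →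
    (Γ.get ⟨j, hj⟩).1 ≤ (Γ.get ⟨i, hi⟩).1

/-- The stack of valid entries of a context. -/
def vstack : List TSeq → List TSeq
  | [] => []
  | s :: Γ => s :: (vstack Γ).filter (fun g => g.1 ≤ s.1)

theorem vstack_subset : ∀ (Γ : List TSeq), ∀ g ∈ vstack Γ, g ∈ Γ := by
  intro Γ
  induction Γ with
  | nil => intro g hg; simp [vstack] at hg
  | cons s Γ ih =>
      intro g hg
      rcases List.mem_cons.1 hg with hg | hg
      · exact hg ▸ List.mem_cons_self
      · exact List.mem_cons.2 (Or.inr (ih g (List.mem_of_mem_filter hg)))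

theorem vstack_mem_index : ∀ (Γ : List TSeq) (s : TSeq), s ∈ vstack Γ →
    ∃ j, ∃ hj : j < Γ.length, Γ.get ⟨j, hj⟩ = s ∧ validIdx Γ j := by
  intro Γ
  induction Γ with
  | nil => intro s hs; simp [vstack] at hs
  | cons g Γ ih =>
      intro s hs
      rcases List.mem_cons.1 hs with hs | hs
      · subst hs
        exact ⟨0, Nat.succ_pos _, rfl, fun i hi hj hij => absurd hij (Nat.not_lt_zero i)⟩
      · have hs' := List.mem_filter.1 hs
        have hle : s.1 ≤ g.1 := by simpa using hs'.2
        obtain ⟨j, hj, heq, hval⟩ := ih s hs'.1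
        refine ⟨j + 1, Nat.succ_lt_succ hj, heq, ?_⟩
        intro i hi hj' hij
        match i, hi with
        | 0, _ =>
            rw [← heq] at hle
            simpa using hle
        | (i+1), hi =>
            exact hval i (Nat.lt_of_succ_lt_succ hi) hj (Nat.lt_of_succ_lt_succ hij)

/-- Weight of a sequent for the termination measure. -/
def wgt (K N : ℕ) (g : TSeq) : ℕ := (K + 1) ^ (N - g.1)

/-- Sum of weights of currently valid entries. -/
def sumw (K N : ℕ) (Γ : List TSeq) : ℕ := ((vstack Γ).map (wgt K N)).sum

theorem sumw_le (G : Finset TSeq) (Γ : List TSeq)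
    (hsub : ∀ g ∈ Γ, g ∈ G) (hnd : (vstack Γ).Nodup) :
    sumw G.card (G.sup Prod.fst) Γ ≤ G.card * (G.card + 1) ^ (G.sup Prod.fst) := by
  set K := G.card
  set N := G.sup Prod.fst
  have hsub' : ∀ g ∈ vstack Γ, g ∈ G := fun g hg => hsub g (vstack_subset Γ g hg)
  have h1 : sumw K N Γ = ∑ g ∈ (vstack Γ).toFinset, wgt K N g :=
    (List.sum_toFinset _ hnd).symm
  rw [h1]
  calc ∑ g ∈ (vstack Γ).toFinset, wgt K N g
      ≤ ∑ g ∈ G, wgt K N g := by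
        apply Finset.sum_le_sum_of_subset
        intro g hg
        exact hsub' g (List.mem_toFinset.1 hg)
    _ ≤ G.card * (K + 1) ^ N := by
        have := Finset.sum_le_card_nsmul G (wgt K N) ((K + 1) ^ N)
          (fun g _ => Nat.pow_le_pow_right (Nat.succ_le_succ (Nat.zero_le K)) (Nat.sub_le N g.1))
        simpa [smul_eq_mul] using this

theorem sumw_push (G : Finset TSeq) (Γ : List TSeq) (s : TSeq)
    (hs : s ∈ G) (hsub : ∀ g ∈ Γ, g ∈ G) (hnd : (vstack Γ).Nodup) :
    sumw G.card (G.sup Prod.fst) Γ + 1 ≤ sumw G.card (G.sup Prod.fst) (s :: Γ) := by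
  set K := G.card with hK
  set N := G.sup Prod.fst with hN
  have hsub' : ∀ g ∈ vstack Γ, g ∈ G := fun g hg => hsub g (vstack_subset Γ g hg)
  have hsplit : sumw K N (s :: Γ)
      = wgt K N s + ∑ g ∈ (vstack Γ).toFinset.filter (fun g => g.1 ≤ s.1), wgt K N g := by
    have h2 : ((vstack Γ).filter (fun g => g.1 ≤ s.1)).toFinset
        = (vstack Γ).toFinset.filter (fun g => g.1 ≤ s.1) := by
      simp [List.toFinset_filter]
    have h3 : ∑ g ∈ ((vstack Γ).filter (fun g => g.1 ≤ s.1)).toFinset, wgt K N g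
        = (((vstack Γ).filter (fun g => g.1 ≤ s.1)).map (wgt K N)).sum :=
      List.sum_toFinset _ (hnd.filter _)
    rw [sumw, vstack, List.map_cons, List.sum_cons, ← h3, h2]
  have hold : sumw K N Γ
      = ∑ g ∈ (vstack Γ).toFinset.filter (fun g => g.1 ≤ s.1), wgt K N g
        + ∑ g ∈ (vstack Γ).toFinset.filter (fun g => ¬ g.1 ≤ s.1), wgt K N g := by
    rw [sumw, ← List.sum_toFinset _ hnd, Finset.sum_filter_add_sum_filter_not]
  -- the popped entries weigh strictly less than the new entry
  have hpop : ∑ g ∈ (vstack Γ).toFinset.filter (fun g => ¬ g.1 ≤ s.1), wgt K N g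
      < wgt K N s := by
    set P := (vstack Γ).toFinset.filter (fun g => ¬ g.1 ≤ s.1) with hP
    rcases P.eq_empty_or_nonempty with he | hne
    · rw [he]
      simp only [Finset.sum_empty, wgt]
      exact Nat.pow_pos (Nat.succ_pos K)
    · obtain ⟨g0, hg0⟩ := hne
      have hg0' := Finset.mem_filter.1 hg0
      have hg0G : g0 ∈ G := hsub' g0 (List.mem_toFinset.1 hg0'.1)
      have hg0N : g0.1 ≤ N := Finset.le_sup (f := Prod.fst) hg0G
      have hsN : s.1 < N := by
        have h4 : ¬ g0.1 ≤ s.1 := hg0'.2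
        omega
      have hbound : ∀ g ∈ P, wgt K N g ≤ (K + 1) ^ (N - s.1 - 1) := by
        intro g hg
        have hg' := Finset.mem_filter.1 hg
        have hgG : g ∈ G := hsub' g (List.mem_toFinset.1 hg'.1)
        have hgN : g.1 ≤ N := Finset.le_sup (f := Prod.fst) hgG
        have hgs : ¬ g.1 ≤ s.1 := hg'.2
        exact Nat.pow_le_pow_right (Nat.succ_le_succ (Nat.zero_le K)) (by omega)
      have hcard : P.card ≤ K := by
        have hPG : P ⊆ G := by
          intro g hg
          exact hsub' g (List.mem_toFinset.1 (Finset.mem_filter.1 hg).1)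
        exact Finset.card_le_card hPG
      calc ∑ g ∈ P, wgt K N g ≤ P.card * (K + 1) ^ (N - s.1 - 1) := by
              have := Finset.sum_le_card_nsmul P (wgt K N) ((K + 1) ^ (N - s.1 - 1)) hbound
              simpa [smul_eq_mul] using this
        _ ≤ K * (K + 1) ^ (N - s.1 - 1) :=
              Nat.mul_le_mul_right _ hcard
        _ < (K + 1) * (K + 1) ^ (N - s.1 - 1) :=
              (Nat.mul_lt_mul_right (Nat.pow_pos (Nat.succ_pos K))).2 (Nat.lt_succ_self K)
        _ = (K + 1) ^ (N - s.1) := by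
              rw [← pow_succ']
              congr 1
              omega
  omega

end Stmt6Aux
namespace Stmt6Aux

theorem build (G : Finset TSeq)
    (hG : ∀ x : TSeq, x ∈ G → OneStep (↑G) x.1 x.2) :
    ∀ (fuel : ℕ) (Γ : List TSeq) (n : ℕ) (t : Tm), ((n, t) : TSeq) ∈ G →
      (∀ g ∈ Γ, g ∈ G) → (vstack Γ).Nodup →
      G.card * (G.card + 1) ^ (G.sup Prod.fst) + 1 - sumw G.card (G.sup Prod.fst) Γ ≤ fuel →
      ∃ D : Deriv true Γ (n, t), D.SC0 ∧
        (∀ j (hj : j < Γ.length), D.Holds (Γ.get ⟨j, hj⟩).1 j) ∧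
        (∀ j (hj : j < Γ.length), D.uses j → (Γ.get ⟨j, hj⟩).1 ≤ n ∧ validIdx Γ j) := by
  intro fuel
  induction fuel with
  | zero =>
      intro Γ n t _ hctx hnd hfuel
      exfalso
      have := sumw_le G Γ hctx hnd
      omega
  | succ fuel ih =>
      intro Γ n t hmem hctx hnd hfuel
      by_cases hv : ((n, t) : TSeq) ∈ vstack Γ
      · -- close with an assumption at a valid occurrence
        obtain ⟨j, hj, heq, hval⟩ := vstack_mem_index Γ (n, t) hv
        obtain ⟨h1, h2⟩ : (Γ.get ⟨j, hj⟩).1 = n ∧ (Γ.get ⟨j, hj⟩).2 = t := by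
          rw [heq]; exact ⟨rfl, rfl⟩
        subst h1; subst h2
        refine ⟨Deriv.assum Γ ⟨j, hj⟩, by simp, ?_, ?_⟩
        · intro j' hj'
          simp only [Deriv.Holds]
          intro he
          have he' : j = j' := he
          subst he'
          exact le_refl _
        · intro j' hj' hu
          simp only [Deriv.uses] at hu
          have he' : j = j' := hu
          subst he'
          exact ⟨le_refl _, hval⟩
      · -- expand with FIX followed by a decomposition rule
        have hctx' : ∀ g ∈ (((n, t) : TSeq) :: Γ), g ∈ G := by
          intro g hg
          rcases List.mem_cons.1 hg with hg | hg
          · exact hg ▸ hmem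
          · exact hctx g hg
        have hnd' : (vstack (((n, t) : TSeq) :: Γ)).Nodup := by
          simp only [vstack]
          exact List.nodup_cons.2 ⟨fun h => hv (List.mem_of_mem_filter h), hnd.filter _⟩
        have hfuel' : G.card * (G.card + 1) ^ (G.sup Prod.fst) + 1
            - sumw G.card (G.sup Prod.fst) (((n, t) : TSeq) :: Γ) ≤ fuel := by
          have hp := sumw_push G Γ (n, t) hmem hctx hnd
          have hl := sumw_le G Γ hctx hnd
          omega
        -- helper to build the valid-entry bound for a child derivation
        rcases hG (n, t) hmem with ⟨ht, hn1⟩ | ⟨hlab, hs, hmemc⟩ |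
          ⟨hlab, hs0, hs1, hmc0, hmc1⟩ | ⟨n', hn, hocc, hmemc⟩
        · -- axiom
          have ht' : t = var0Tm := ht
          subst ht'
          refine ⟨Deriv.ax Γ n hn1 (fun h => nomatch h), by simp, ?_, ?_⟩
          · intro j hj; simp only [Deriv.Holds]
          · intro j hj hu; simp only [Deriv.uses] at hu
        · -- λ rule
          obtain ⟨D2, hS2, hH2, hU2⟩ :=
            ih (((n, t) : TSeq) :: Γ) (n + 1) (t.sub [false] hs) hmemc hctx' hnd' hfuel'
          have hle : ∀ k (hk : k < (((n, t) : TSeq) :: Γ).length), D2.uses k →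
              ((((n, t) : TSeq) :: Γ).get ⟨k, hk⟩).1 ≤ n := by
            intro k hk hu
            match k, hk with
            | 0, _ => exact le_refl n
            | (k+1), hk =>
                have hval := (hU2 (k+1) hk hu).2
                exact hval 0 (Nat.succ_pos _) hk (Nat.succ_pos k)
          refine ⟨Deriv.fix Γ (n, t) (Deriv.lam _ n t hlab hs D2), ?_, ?_, ?_⟩
          · simp only [Deriv.SC0, Deriv.depth, Deriv.Holds]
            refine ⟨hS2, by omega, fun _ => le_refl n, hH2 0 (Nat.succ_pos _)⟩
          · intro j hj
            simp only [Deriv.Holds, Deriv.uses]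
            exact ⟨fun hu => hle (j+1) (Nat.succ_lt_succ hj) hu,
              fun hu => hle (j+1) (Nat.succ_lt_succ hj) hu,
              hH2 (j+1) (Nat.succ_lt_succ hj)⟩
          · intro j hj hu
            simp only [Deriv.uses] at hu
            have h2 := (hU2 (j+1) (Nat.succ_lt_succ hj) hu).2
            refine ⟨hle (j+1) (Nat.succ_lt_succ hj) hu, ?_⟩
            intro i hi hj2 hij
            exact h2 (i+1) (Nat.succ_lt_succ hi) (Nat.succ_lt_succ hj2) (Nat.succ_lt_succ hij)
        · -- application rule
          obtain ⟨D20, hS20, hH20, hU20⟩ :=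
            ih (((n, t) : TSeq) :: Γ) n (t.sub [false] hs0) hmc0 hctx' hnd' hfuel'
          obtain ⟨D21, hS21, hH21, hU21⟩ :=
            ih (((n, t) : TSeq) :: Γ) n (t.sub [true] hs1) hmc1 hctx' hnd' hfuel'
          have hle : ∀ k (hk : k < (((n, t) : TSeq) :: Γ).length), (D20.uses k ∨ D21.uses k) →
              ((((n, t) : TSeq) :: Γ).get ⟨k, hk⟩).1 ≤ n := by
            intro k hk hu
            match k, hk with
            | 0, _ => exact le_refl n
            | (k+1), hk =>
                have hval : validIdx (((n, t) : TSeq) :: Γ) (k+1) := by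
                  rcases hu with hu | hu
                  · exact (hU20 (k+1) hk hu).2
                  · exact (hU21 (k+1) hk hu).2
                exact hval 0 (Nat.succ_pos _) hk (Nat.succ_pos k)
          refine ⟨Deriv.fix Γ (n, t) (Deriv.app _ n t hlab hs0 hs1 D20 D21), ?_, ?_, ?_⟩
          · simp only [Deriv.SC0, Deriv.depth, Deriv.Holds]
            exact ⟨⟨hS20, hS21⟩, by omega, fun _ => le_refl n,
              hH20 0 (Nat.succ_pos _), hH21 0 (Nat.succ_pos _)⟩
          · intro j hj
            simp only [Deriv.Holds, Deriv.uses]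
            exact ⟨fun hu => hle (j+1) (Nat.succ_lt_succ hj) hu,
              fun hu => hle (j+1) (Nat.succ_lt_succ hj) hu,
              hH20 (j+1) (Nat.succ_lt_succ hj), hH21 (j+1) (Nat.succ_lt_succ hj)⟩
          · intro j hj hu
            simp only [Deriv.uses] at hu
            have h2 : validIdx (((n, t) : TSeq) :: Γ) (j+1) := by
              rcases hu with hu' | hu'
              · exact (hU20 (j+1) (Nat.succ_lt_succ hj) hu').2
              · exact (hU21 (j+1) (Nat.succ_lt_succ hj) hu').2
            refine ⟨hle (j+1) (Nat.succ_lt_succ hj) hu, ?_⟩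
            intro i hi hj2 hij
            exact h2 (i+1) (Nat.succ_lt_succ hi) (Nat.succ_lt_succ hj2) (Nat.succ_lt_succ hij)
        · -- deletion rule
          subst hn
          obtain ⟨D2, hS2, hH2, hU2⟩ :=
            ih (((n' + 1, t) : TSeq) :: Γ) n' (downJ 0 t) hmemc hctx' hnd' hfuel'
          have hle : ∀ k (hk : k < (((n' + 1, t) : TSeq) :: Γ).length), D2.uses k →
              ((((n' + 1, t) : TSeq) :: Γ).get ⟨k, hk⟩).1 ≤ n' + 1 := by
            intro k hk hu
            match k, hk with
            | 0, _ => exact le_refl _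
            | (k+1), hk =>
                have hval := (hU2 (k+1) hk hu).2
                exact hval 0 (Nat.succ_pos _) hk (Nat.succ_pos k)
          refine ⟨Deriv.fix Γ (n' + 1, t)
            (Deriv.del _ n' t 0 (Nat.zero_le _) (fun _ => rfl) hocc D2), ?_, ?_, ?_⟩
          · simp only [Deriv.SC0, Deriv.depth, Deriv.Holds]
            refine ⟨hS2, by omega, fun _ => le_refl _, hH2 0 (Nat.succ_pos _)⟩
          · intro j hj
            simp only [Deriv.Holds, Deriv.uses]
            exact ⟨fun hu => hle (j+1) (Nat.succ_lt_succ hj) hu,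
              fun hu => hle (j+1) (Nat.succ_lt_succ hj) hu,
              hH2 (j+1) (Nat.succ_lt_succ hj)⟩
          · intro j hj hu
            simp only [Deriv.uses] at hu
            have h2 := (hU2 (j+1) (Nat.succ_lt_succ hj) hu).2
            refine ⟨hle (j+1) (Nat.succ_lt_succ hj) hu, ?_⟩
            intro i hi hj2 hij
            exact h2 (i+1) (Nat.succ_lt_succ hi) (Nat.succ_lt_succ hj2) (Nat.succ_lt_succ hij)

end Stmt6Aux
/-- For every infinite λ-term `M`, the empty-prefix sequent
`() M` is derivable in `Reg⁺` (closed derivation satisfying the FIX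
side-condition `SC`) if and only if it is derivable in `Reg₀⁺` (closed
derivation satisfying the strengthened side-condition `SC0`). -/
theorem stmt6 (M : Tm) (hM : ClosedTm M) :
    (∃ D : Deriv true [] ((0 : ℕ), M), D.SC) ↔
    (∃ D : Deriv true [] ((0 : ℕ), M), D.SC0) := by
  classical
  constructor
  · rintro ⟨D, hD⟩
    have hfin : D.seqs.Finite := Stmt6Aux.seqs_finite D
    set G : Finset TSeq := hfin.toFinset with hGdef
    have hco : (G : Set TSeq) = D.seqs := hfin.coe_toFinset
    have hGall : ∀ x : TSeq, x ∈ G → Stmt6Aux.OneStep (↑G) x.1 x.2 := by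
      intro x hx
      have hx' : x ∈ D.seqs := hfin.mem_toFinset.1 hx
      refine Stmt6Aux.good_all D (↑G) hD (by rw [hco]) ?_ x hx'
      intro j hj
      exact absurd hj (by simp)
    have hmem : ((0, M) : TSeq) ∈ G := hfin.mem_toFinset.2 (Stmt6Aux.concl_mem_seqs D)
    have hsumw : Stmt6Aux.sumw G.card (G.sup Prod.fst) [] = 0 := rfl
    obtain ⟨D', hS, -, -⟩ := Stmt6Aux.build G hGall
      (G.card * (G.card + 1) ^ (G.sup Prod.fst) + 1) [] 0 M hmem
      (by intro g hg; simp at hg) (by constructor)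
      (by rw [hsumw]; omega)
    exact ⟨D', hS⟩
  · rintro ⟨D, hD⟩
    exact ⟨D, Stmt6Aux.sc0_imp_sc D hD⟩
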